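/- Define the block matrix M(t) ∈ ℝ^{2n×2n} by M(t) = [[A₁(t) + B(t)G, B(t)], [Q(t) − G·A₁(t) − A₂(t)ᵀG − G·B(t)·G, −A₂(t)ᵀ − G·B(t)]]. Suppose Φ : [0,T] → ℝ^{2n×2n} is differentiable with Φ̇(s) = −Φ(s)·M(s) for s ∈ [0,T] and Φ(T) = I, and suppose the lower-right n×n block Φ₂₂(t) of Φ(t) is invertible for every t ∈ [0,T]. Then the function P(t) := G − Φ₂₂(t)⁻¹·Φ₂₁(t), where Φ₂₁(t) is the lower-left n×n block of Φ(t), is differentiable and satisfies Ṗ(t) + P(t)A₁(t) + A₂(t)ᵀP(t) + P(t)B(t)P(t) − Q(t) = 0 on [0,T] with P(T) = G. (This is the explicit-solution formula (5.5) of the final proposition of Section 5 of the paper, giving the unique solutions P₂, P₃, P̂ of the Riccati equations (5.2)–(5.4) via the state transition matrix Ψᵢ(T,t) of the associated linear matrix ODE.) -/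

import Mathlib

open Matrix Set Filter Topology

attribute [local instance] Matrix.normedAddCommGroup Matrix.normedSpace

set_option linter.unusedSectionVars false
set_option linter.unusedVariables false
section RiccatiToolkit
variable {ι : Type*} [Fintype ι] [DecidableEq ι]

noncomputable def RiccatiAux.linToCLM {E F : Type*} [NormedAddCommGroup E] [NormedSpace ℝ E]
    [NormedAddCommGroup F] [NormedSpace ℝ F] [FiniteDimensional ℝ E]
    (f : E →ₗ[ℝ] F) : E →L[ℝ] F := LinearMap.toContinuousLinearMap f

namespace RiccatiAux

set_option linter.unusedSectionVars false

lemma diff_entry (i j : ι) : Differentiable ℝ (fun A : Matrix ι ι ℝ => A i j) :=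
  (linToCLM (Matrix.entryLinearMap ℝ ℝ i j)).differentiable

lemma diff_det : Differentiable ℝ (fun A : Matrix ι ι ℝ => A.det) := by
  have : (fun A : Matrix ι ι ℝ => A.det)
      = fun A => ∑ σ : Equiv.Perm ι, ((Equiv.Perm.sign σ : ℤ) : ℝ) * ∏ i, A (σ i) i := by
    funext A; rw [Matrix.det_apply]
    simp [Units.smul_def, zsmul_eq_mul]
  rw [this]
  apply Differentiable.fun_sum
  intro σ _
  apply Differentiable.const_mul
  intro A
  exact (HasFDerivAt.finset_prod (fun i _ =>
    ((diff_entry (σ i) i) A).hasFDerivAt)).differentiableAt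

noncomputable def updRowLin (j : ι) : Matrix ι ι ℝ →ₗ[ℝ] Matrix ι ι ℝ where
  toFun A := A.updateRow j 0
  map_add' A B := by
    ext k l; by_cases h : k = j <;> simp [Matrix.updateRow_apply, h]
  map_smul' c A := by
    ext k l; by_cases h : k = j <;> simp [Matrix.updateRow_apply, h]

lemma updRow_eq (j : ι) (c : ι → ℝ) (A : Matrix ι ι ℝ) :
    A.updateRow j c = updRowLin j A + (0 : Matrix ι ι ℝ).updateRow j c := by
  ext k l; by_cases h : k = j <;> simp [updRowLin, Matrix.updateRow_apply, h]

lemma diff_adjugate_entry (i j : ι) :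
    Differentiable ℝ (fun A : Matrix ι ι ℝ => A.adjugate i j) := by
  have : (fun A : Matrix ι ι ℝ => A.adjugate i j)
      = fun A => (linToCLM (updRowLin j) A + (0 : Matrix ι ι ℝ).updateRow j (Pi.single i 1)).det := by
    funext A; rw [Matrix.adjugate_apply, updRow_eq]; rfl
  rw [this]
  exact diff_det.comp ((linToCLM (updRowLin j)).differentiable.add_const _)

lemma diffAt_matrix {f : ℝ → Matrix ι ι ℝ} {t : ℝ}
    (h : ∀ i j, DifferentiableAt ℝ (fun s => f s i j) t) :
    DifferentiableAt ℝ f t := by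
  refine differentiableAt_pi.2 ?_; intro i
  refine differentiableAt_pi.2 ?_; exact h i

noncomputable def mulCLM : Matrix ι ι ℝ →L[ℝ] Matrix ι ι ℝ →L[ℝ] Matrix ι ι ℝ :=
  linToCLM
  { toFun := fun A => linToCLM
      { toFun := fun B => A * B
        map_add' := fun B C => Matrix.mul_add A B C
        map_smul' := fun c B => (Matrix.mul_smul A c B).symm ▸ rfl }
    map_add' := fun A B => by
      apply ContinuousLinearMap.ext; intro C
      exact Matrix.add_mul A B C
    map_smul' := fun c A => by
      apply ContinuousLinearMap.ext; intro C
      exact Matrix.smul_mul c A C }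

@[simp] lemma mulCLM_apply (A B : Matrix ι ι ℝ) : mulCLM A B = A * B := rfl

lemma hasDerivAt_matmul {f g : ℝ → Matrix ι ι ℝ} {f' g' : Matrix ι ι ℝ} {t : ℝ}
    (hf : HasDerivAt f f' t) (hg : HasDerivAt g g' t) :
    HasDerivAt (fun s => f s * g s) (f' * g t + f t * g') t := by
  refine hasDerivAt_pi.2 fun i => hasDerivAt_pi.2 fun j => ?_
  have hf' := fun i k => hasDerivAt_pi.1 (hasDerivAt_pi.1 hf i) k
  have hg' := fun i k => hasDerivAt_pi.1 (hasDerivAt_pi.1 hg i) k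
  simp only [Matrix.add_apply, Matrix.mul_apply, ← Finset.sum_add_distrib]
  exact HasDerivAt.fun_sum fun k _ => (hf' i k).mul (hg' k j)

lemma hasDerivAt_inv_matrix {Y : ℝ → Matrix ι ι ℝ} {Y' : Matrix ι ι ℝ} {t : ℝ}
    (hY : HasDerivAt Y Y' t) (hu : IsUnit (Y t)) :
    HasDerivAt (fun s => (Y s)⁻¹) (-((Y t)⁻¹ * Y' * (Y t)⁻¹)) t := by
  have hdet : (Y t).det ≠ 0 :=
    ((Matrix.isUnit_iff_isUnit_det _).mp hu).ne_zero
  have hdY : DifferentiableAt ℝ (fun s => (Y s).det) t :=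
    (diff_det (Y t)).comp t hY.differentiableAt
  have hX : DifferentiableAt ℝ (fun s => (Y s)⁻¹) t := by
    have heq : (fun s => (Y s)⁻¹) = fun s => ((Y s).det)⁻¹ • (Y s).adjugate := by
      funext s; rw [Matrix.inv_def, Ring.inverse_eq_inv']
    rw [heq]
    exact (hdY.inv hdet).smul (diffAt_matrix fun i j =>
      (diff_adjugate_entry i j (Y t)).comp t hY.differentiableAt)
  obtain ⟨d, hd⟩ : ∃ d, HasDerivAt (fun s => (Y s)⁻¹) d t := ⟨_, hX.hasDerivAt⟩
  have hev : ∀ᶠ s in 𝓝 t, Y s * (Y s)⁻¹ = 1 := by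
    filter_upwards [hdY.continuousAt.eventually_ne hdet] with s hs
    exact Matrix.mul_nonsing_inv _ (isUnit_iff_ne_zero.mpr hs)
  have hprod : HasDerivAt (fun s => Y s * (Y s)⁻¹) (Y' * (Y t)⁻¹ + Y t * d) t :=
    hasDerivAt_matmul hY hd
  have hzero : HasDerivAt (fun s => Y s * (Y s)⁻¹) (0 : Matrix ι ι ℝ) t :=
    (hasDerivAt_const t (1 : Matrix ι ι ℝ)).congr_of_eventuallyEq hev
  have hkey : Y' * (Y t)⁻¹ + Y t * d = 0 := hprod.unique hzero
  have hinvmul : (Y t)⁻¹ * Y t = 1 :=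
    Matrix.nonsing_inv_mul _ ((Matrix.isUnit_iff_isUnit_det _).mp hu)
  have : d = -((Y t)⁻¹ * Y' * (Y t)⁻¹) := by
    have h2 : Y t * d = -(Y' * (Y t)⁻¹) := by
      rw [eq_neg_iff_add_eq_zero, add_comm]; exact hkey
    calc d = (Y t)⁻¹ * (Y t * d) := by rw [← Matrix.mul_assoc, hinvmul, Matrix.one_mul]
    _ = -((Y t)⁻¹ * Y' * (Y t)⁻¹) := by rw [h2]; simp [Matrix.mul_assoc]
  rwa [this] at hd

end RiccatiAux
end RiccatiToolkit

section Blocks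
variable {α β : Type*} [Fintype α] [Fintype β] [DecidableEq α] [DecidableEq β]

namespace RiccatiAux

def b21Lin : Matrix (α ⊕ β) (α ⊕ β) ℝ →ₗ[ℝ] Matrix β α ℝ where
  toFun := Matrix.toBlocks₂₁
  map_add' _ _ := rfl
  map_smul' _ _ := rfl

def b22Lin : Matrix (α ⊕ β) (α ⊕ β) ℝ →ₗ[ℝ] Matrix β β ℝ where
  toFun := Matrix.toBlocks₂₂
  map_add' _ _ := rfl
  map_smul' _ _ := rfl

lemma toBlocks₂₁_mul (A B : Matrix (α ⊕ β) (α ⊕ β) ℝ) :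
    (A * B).toBlocks₂₁ = A.toBlocks₂₁ * B.toBlocks₁₁ + A.toBlocks₂₂ * B.toBlocks₂₁ := by
  have h := Matrix.fromBlocks_multiply A.toBlocks₁₁ A.toBlocks₁₂ A.toBlocks₂₁ A.toBlocks₂₂
    B.toBlocks₁₁ B.toBlocks₁₂ B.toBlocks₂₁ B.toBlocks₂₂
  rw [Matrix.fromBlocks_toBlocks, Matrix.fromBlocks_toBlocks] at h
  rw [h, Matrix.toBlocks_fromBlocks₂₁]

lemma toBlocks₂₂_mul (A B : Matrix (α ⊕ β) (α ⊕ β) ℝ) :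
    (A * B).toBlocks₂₂ = A.toBlocks₂₁ * B.toBlocks₁₂ + A.toBlocks₂₂ * B.toBlocks₂₂ := by
  have h := Matrix.fromBlocks_multiply A.toBlocks₁₁ A.toBlocks₁₂ A.toBlocks₂₁ A.toBlocks₂₂
    B.toBlocks₁₁ B.toBlocks₁₂ B.toBlocks₂₁ B.toBlocks₂₂
  rw [Matrix.fromBlocks_toBlocks, Matrix.fromBlocks_toBlocks] at h
  rw [h, Matrix.toBlocks_fromBlocks₂₂]

lemma toBlocks₂₁_neg (A : Matrix (α ⊕ β) (α ⊕ β) ℝ) :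
    (-A).toBlocks₂₁ = -A.toBlocks₂₁ := rfl

lemma toBlocks₂₂_neg (A : Matrix (α ⊕ β) (α ⊕ β) ℝ) :
    (-A).toBlocks₂₂ = -A.toBlocks₂₂ := rfl

lemma hasDerivAt_b21 {Φ : ℝ → Matrix (α ⊕ β) (α ⊕ β) ℝ} {Φ' : Matrix (α ⊕ β) (α ⊕ β) ℝ} {t : ℝ}
    (h : HasDerivAt Φ Φ' t) :
    HasDerivAt (fun s => (Φ s).toBlocks₂₁) Φ'.toBlocks₂₁ t :=
  ((linToCLM b21Lin).hasFDerivAt.comp_hasDerivAt t h :)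

lemma hasDerivAt_b22 {Φ : ℝ → Matrix (α ⊕ β) (α ⊕ β) ℝ} {Φ' : Matrix (α ⊕ β) (α ⊕ β) ℝ} {t : ℝ}
    (h : HasDerivAt Φ Φ' t) :
    HasDerivAt (fun s => (Φ s).toBlocks₂₂) Φ'.toBlocks₂₂ t :=
  ((linToCLM b22Lin).hasFDerivAt.comp_hasDerivAt t h :)

end RiccatiAux
end Blocks

open RiccatiAux in
/-- Explicit-solution formula (5.5): if `Φ` solves the backward linear matrix
ODE `Φ̇ = −Φ·M` with `Φ(T) = I` for the block matrix
`M = [[A₁+BG, B], [Q − GA₁ − A₂ᵀG − GBG, −A₂ᵀ − GB]]`, and the lower-right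
block `Φ₂₂(t)` is invertible on `[0,T]`, then `P(t) = G − Φ₂₂(t)⁻¹ Φ₂₁(t)`
solves the terminal-value Riccati equation. -/
theorem riccati_solution_via_transition_matrix {n : ℕ} (T : ℝ) (hT : 0 < T)
    (A₁ A₂ B Q : ℝ → Matrix (Fin n) (Fin n) ℝ)
    (hA₁ : ContinuousOn A₁ (Icc 0 T)) (hA₂ : ContinuousOn A₂ (Icc 0 T))
    (hB : ContinuousOn B (Icc 0 T)) (hQ : ContinuousOn Q (Icc 0 T))
    (G : Matrix (Fin n) (Fin n) ℝ)
    (M : ℝ → Matrix (Fin n ⊕ Fin n) (Fin n ⊕ Fin n) ℝ)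
    (hM : ∀ t : ℝ, M t =
      Matrix.fromBlocks (A₁ t + B t * G) (B t)
        (Q t - G * A₁ t - (A₂ t)ᵀ * G - G * B t * G) (-(A₂ t)ᵀ - G * B t))
    (Φ : ℝ → Matrix (Fin n ⊕ Fin n) (Fin n ⊕ Fin n) ℝ)
    (hΦ : ∀ s ∈ Icc 0 T, HasDerivAt Φ (-(Φ s * M s)) s)
    (hΦT : Φ T = 1)
    (hinv : ∀ t ∈ Icc 0 T, IsUnit ((Φ t).toBlocks₂₂))
    (P : ℝ → Matrix (Fin n) (Fin n) ℝ)
    (hPdef : ∀ t : ℝ, P t = G - ((Φ t).toBlocks₂₂)⁻¹ * (Φ t).toBlocks₂₁) :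
    (∀ t ∈ Icc 0 T,
      HasDerivAt P (-(P t * A₁ t + (A₂ t)ᵀ * P t + P t * B t * P t - Q t)) t) ∧
    P T = G := by
  have hPfun : P = fun s => G - ((Φ s).toBlocks₂₂)⁻¹ * (Φ s).toBlocks₂₁ := funext hPdef
  constructor
  · intro t ht
    set Y : ℝ → Matrix (Fin n) (Fin n) ℝ := fun s => (Φ s).toBlocks₂₂ with hYdef
    set Z : ℝ → Matrix (Fin n) (Fin n) ℝ := fun s => (Φ s).toBlocks₂₁ with hZdef
    -- block data of M t
    have hM11 : (M t).toBlocks₁₁ = A₁ t + B t * G := by rw [hM t, Matrix.toBlocks_fromBlocks₁₁]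
    have hM12 : (M t).toBlocks₁₂ = B t := by rw [hM t, Matrix.toBlocks_fromBlocks₁₂]
    have hM21 : (M t).toBlocks₂₁ = Q t - G * A₁ t - (A₂ t)ᵀ * G - G * B t * G := by
      rw [hM t, Matrix.toBlocks_fromBlocks₂₁]
    have hM22 : (M t).toBlocks₂₂ = -(A₂ t)ᵀ - G * B t := by
      rw [hM t, Matrix.toBlocks_fromBlocks₂₂]
    -- derivatives of blocks
    have hZ' : HasDerivAt Z (-(Z t * (M t).toBlocks₁₁ + Y t * (M t).toBlocks₂₁)) t := by
      have := hasDerivAt_b21 (hΦ t ht)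
      rwa [toBlocks₂₁_neg, toBlocks₂₁_mul] at this
    have hY' : HasDerivAt Y (-(Z t * (M t).toBlocks₁₂ + Y t * (M t).toBlocks₂₂)) t := by
      have := hasDerivAt_b22 (hΦ t ht)
      rwa [toBlocks₂₂_neg, toBlocks₂₂_mul] at this
    have hu : IsUnit (Y t) := hinv t ht
    have hYi : HasDerivAt (fun s => (Y s)⁻¹)
        (-((Y t)⁻¹ * (-(Z t * (M t).toBlocks₁₂ + Y t * (M t).toBlocks₂₂)) * (Y t)⁻¹)) t :=
      hasDerivAt_inv_matrix hY' hu
    have hprod := hasDerivAt_matmul hYi hZ'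
    have hP : HasDerivAt P
        ((0 : Matrix (Fin n) (Fin n) ℝ) -
          (-((Y t)⁻¹ * (-(Z t * (M t).toBlocks₁₂ + Y t * (M t).toBlocks₂₂)) * (Y t)⁻¹) * Z t +
            (Y t)⁻¹ * (-(Z t * (M t).toBlocks₁₁ + Y t * (M t).toBlocks₂₁)))) t := by
      rw [hPfun]
      exact (hasDerivAt_const t G).sub hprod
    have hYiY : (Y t)⁻¹ * Y t = 1 :=
      Matrix.nonsing_inv_mul _ ((Matrix.isUnit_iff_isUnit_det _).mp hu)
    have hval :
        ((0 : Matrix (Fin n) (Fin n) ℝ) -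
          (-((Y t)⁻¹ * (-(Z t * (M t).toBlocks₁₂ + Y t * (M t).toBlocks₂₂)) * (Y t)⁻¹) * Z t +
            (Y t)⁻¹ * (-(Z t * (M t).toBlocks₁₁ + Y t * (M t).toBlocks₂₁))))
        = -(P t * A₁ t + (A₂ t)ᵀ * P t + P t * B t * P t - Q t) := by
      rw [hPdef t, hM11, hM12, hM21, hM22]
      set Yi := (Y t)⁻¹
      set W := Yi * Z t with hW
      have e1 : Yi * (Z t * B t + Y t * (-(A₂ t)ᵀ - G * B t))
          = W * B t + (-(A₂ t)ᵀ - G * B t) := by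
        rw [Matrix.mul_add, ← Matrix.mul_assoc, ← Matrix.mul_assoc, hYiY, Matrix.one_mul, hW,
          Matrix.mul_assoc]
      have e2 : Yi * (Z t * (A₁ t + B t * G) +
            Y t * (Q t - G * A₁ t - (A₂ t)ᵀ * G - G * B t * G))
          = W * (A₁ t + B t * G) + (Q t - G * A₁ t - (A₂ t)ᵀ * G - G * B t * G) := by
        rw [Matrix.mul_add, ← Matrix.mul_assoc, ← Matrix.mul_assoc, hYiY, Matrix.one_mul, hW,
          Matrix.mul_assoc]
      have e3 : -(Yi * (-(Z t * B t + Y t * (-(A₂ t)ᵀ - G * B t))) * Yi) * Z t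
          = (W * B t + (-(A₂ t)ᵀ - G * B t)) * W := by
        rw [Matrix.mul_neg, ← Matrix.neg_mul, neg_neg, Matrix.mul_assoc, Matrix.mul_assoc, ← hW,
          ← Matrix.mul_assoc, e1]
      rw [e3, Matrix.mul_neg, e2]
      noncomm_ring
    rw [hval] at hP
    exact hP
  · rw [hPdef T, hΦT]
    have h1 : (1 : Matrix (Fin n ⊕ Fin n) (Fin n ⊕ Fin n) ℝ).toBlocks₂₂ = 1 := by
      rw [← Matrix.fromBlocks_one, Matrix.toBlocks_fromBlocks₂₂]
    have h2 : (1 : Matrix (Fin n ⊕ Fin n) (Fin n ⊕ Fin n) ℝ).toBlocks₂₁ = 0 := by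
      rw [← Matrix.fromBlocks_one, Matrix.toBlocks_fromBlocks₂₁]
    rw [h1, h2]
    simp
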